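/- For arbitrary functions τ, a : ℂ∖{0} → ℂ, all indices i, j, h ∈ {0,…,p−1} and all λ ∈ ℂ∖{0} at which both sides are defined, the cofactors of D_τ satisfy the cyclic shift symmetry C_{i+h, j+h}(λ) = C_{i,j}(q^h λ), where the indices i+h and j+h are reduced modulo p into {0,…,p−1}. -/

import Mathlib

/-- The `p×p` matrix `D_τ(λ)`, indexed by `ℤ/pℤ`, with entries
`(D_τ(λ))_{k,k} = τ(q^k λ)`, `(D_τ(λ))_{k,k−1} = −a(q^k λ)`,
`(D_τ(λ))_{k,k+1} = −a(1/(q^k λ))`, all other entries zero. -/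
noncomputable def Dmat (p : ℕ) (q : ℂ) (tau a : ℂ → ℂ) (lam : ℂ) :
    Matrix (ZMod p) (ZMod p) ℂ :=
  Matrix.of fun k l : ZMod p =>
    if l = k then tau (q ^ k.val * lam)
    else if l = k - 1 then -a (q ^ k.val * lam)
    else if l = k + 1 then -a ((q ^ k.val * lam)⁻¹)
    else 0

/-- The injection `Fin (p-1) → Fin p` skipping the index `i` (used to delete
row/column `i` of a matrix). -/
def delIdx {p : ℕ} (i : Fin p) (m : Fin (p - 1)) : Fin p :=
  if h : m.val < i.val then ⟨m.val, Nat.lt_trans h i.isLt⟩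
  else ⟨m.val + 1, by have h1 := m.isLt; have h2 := i.isLt; omega⟩

/-- `D_τ(λ)` reindexed by `Fin p` (via the canonical map `Fin p → ℤ/pℤ`). -/
noncomputable def DmatFin (p : ℕ) (q : ℂ) (tau a : ℂ → ℂ) (lam : ℂ) :
    Matrix (Fin p) (Fin p) ℂ :=
  (Dmat p q tau a lam).submatrix (fun r : Fin p => (r.val : ZMod p))
    (fun s : Fin p => (s.val : ZMod p))

/-- The cofactor `C_{i,j}(λ)`: `(−1)^{i+j}` times the determinant of the
`(p−1)×(p−1)` matrix obtained from `D_τ(λ)` by deleting row `i` and column `j`. -/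
noncomputable def cofactor (p : ℕ) (q : ℂ) (tau a : ℂ → ℂ) (i j : Fin p) (lam : ℂ) : ℂ :=
  (-1 : ℂ) ^ (i.val + j.val) *
    ((DmatFin p q tau a lam).submatrix (delIdx i) (delIdx j)).det

lemma delIdx_eq_succAbove {n : ℕ} (i : Fin (n + 1)) (m : Fin n) :
    delIdx i m = i.succAbove m := by
  rw [delIdx, Fin.succAbove]
  split_ifs with h1 h2 h2 <;>
    first
      | rfl
      | (exfalso; simp only [Fin.lt_def, Fin.coe_castSucc] at *; omega)

lemma cofactor_eq_adjugate (p : ℕ) (hp : 0 < p) (q : ℂ) (tau a : ℂ → ℂ)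
    (i j : Fin p) (lam : ℂ) :
    cofactor p q tau a i j lam = (DmatFin p q tau a lam).adjugate j i := by
  obtain ⟨n, rfl⟩ : ∃ n, p = n + 1 := ⟨p - 1, by omega⟩
  rw [Matrix.adjugate_fin_succ_eq_det_submatrix, cofactor]
  have hdel : ∀ k : Fin (n + 1), delIdx k = Fin.succAbove k :=
    fun k => funext (delIdx_eq_succAbove k)
  rw [hdel, hdel, Nat.add_comm i.val j.val]

/-- Cyclic shift symmetry of the cofactors of `D_τ`:
`C_{i+h, j+h}(λ) = C_{i,j}(q^h λ)` (indices mod `p`). -/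
theorem stmt_3 (p : ℕ) (hodd : Odd p) (hp3 : 3 ≤ p)
    (q : ℂ) (hq : IsPrimitiveRoot q p)
    (tau a : ℂ → ℂ) (i j h : Fin p) (lam : ℂ) (hlam : lam ≠ 0) :
    cofactor p q tau a (i + h) (j + h) lam = cofactor p q tau a i j (q ^ h.val * lam) := by
  haveI : NeZero p := ⟨by omega⟩
  have hq1 : q ^ p = 1 := hq.pow_eq_one
  have hpow : ∀ m : ℕ, q ^ m = q ^ (m % p) := by
    intro m
    conv_lhs => rw [← Nat.div_add_mod m p, pow_add, pow_mul, hq1, one_pow, one_mul]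
  set h' : ZMod p := (h.val : ZMod p) with hh'
  set M := Dmat p q tau a lam with hM
  -- the shift equivalence
  let e : Fin p ≃ ZMod p :=
    { toFun := fun r => (r.val : ZMod p)
      invFun := fun z => ⟨z.val, z.val_lt⟩
      left_inv := fun r => Fin.ext (ZMod.val_cast_of_lt r.isLt)
      right_inv := fun z => ZMod.natCast_rightInverse z }
  have hval : ∀ k : ZMod p, q ^ (k + h').val = q ^ k.val * q ^ h.val := by
    intro k
    rw [ZMod.val_add, ← hpow, hh', ZMod.val_cast_of_lt h.isLt, pow_add]
  have key : Dmat p q tau a (q ^ h.val * lam) =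
      M.submatrix (fun z => z + h') (fun z => z + h') := by
    ext k l
    have hd : (q ^ (k + h').val * lam) = q ^ k.val * (q ^ h.val * lam) := by
      rw [hval]; ring
    simp only [Dmat, Matrix.of_apply, Matrix.submatrix_apply, hM]
    have c1 : (l + h' = k + h') ↔ (l = k) := add_left_inj h'
    have c2 : (l + h' = k + h' - 1) ↔ (l = k - 1) := by
      rw [show k + h' - 1 = (k - 1) + h' by ring, add_left_inj]
    have c3 : (l + h' = k + h' + 1) ↔ (l = k + 1) := by
      rw [show k + h' + 1 = (k + 1) + h' by ring, add_left_inj]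
    simp only [c1, c2, c3, hd]
  -- rewrite both sides as adjugate entries of M
  have hDF : DmatFin p q tau a lam = M.submatrix e e := rfl
  have hDF' : DmatFin p q tau a (q ^ h.val * lam) =
      M.submatrix (e.trans (Equiv.addRight h')) (e.trans (Equiv.addRight h')) := by
    rw [DmatFin, key, Matrix.submatrix_submatrix]
    rfl
  rw [cofactor_eq_adjugate p (by omega), cofactor_eq_adjugate p (by omega),
    hDF, hDF', Matrix.adjugate_submatrix_equiv_self, Matrix.adjugate_submatrix_equiv_self,
    Matrix.submatrix_apply, Matrix.submatrix_apply]
  have hadd : ∀ k : Fin p, e (k + h) = e k + h' := by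
    intro k
    show (((k + h : Fin p)).val : ZMod p) = (k.val : ZMod p) + h'
    rw [Fin.val_add, ZMod.natCast_mod, Nat.cast_add, hh']
  rw [hadd, hadd]
  rfl
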